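/- arXiv:2503.15200 — 3 statements merged into one kernel-verified Lean document; each statement's English description precedes it below -/
import Mathlib

section
/- Let Y = {e_1, ..., e_D} be the standard basis vectors of R^D (one-hot observations), and let λ ∈ (0,1) be rational. Define the memory trace of a finite history h = (y_0, y_{-1}, ..., y_{-(n-1)}) ∈ Y^n as z_λ(h) = (1-λ) Σ_{k=0}^{n-1} λ^k y_{-k}. Then z_λ is injective on the set of all finite histories: if h and h' are distinct finite sequences over Y, then z_λ(h) ≠ z_λ(h'). -/
open Polynomial Finset

/-- Injectivity of the memory trace on finite one-hot histories for rational λ ∈ (0,1).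
Histories are compared after zero-padding. -/
theorem memory_trace_finite_injective
    (D : ℕ) (lam : ℝ) (hrat : ∃ q : ℚ, (q : ℝ) = lam)
    (h0 : 0 < lam) (h1 : lam < 1)
    (n n' : ℕ) (y : Fin n → Fin D) (y' : Fin n' → Fin D)
    (hne : (fun k : ℕ => if hk : k < n then
        EuclideanSpace.single (𝕜 := ℝ) (y ⟨k, hk⟩) 1 else 0)
      ≠ (fun k : ℕ => if hk : k < n' then
        EuclideanSpace.single (𝕜 := ℝ) (y' ⟨k, hk⟩) 1 else 0)) :
    (1 - lam) • ∑ k : Fin n, lam ^ (k : ℕ) • EuclideanSpace.single (𝕜 := ℝ) (y k) 1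
      ≠ (1 - lam) • ∑ k : Fin n', lam ^ (k : ℕ) • EuclideanSpace.single (𝕜 := ℝ) (y' k) 1 := by
  obtain ⟨q, hq⟩ := hrat
  intro heq
  set f : ℕ → EuclideanSpace ℝ (Fin D) := fun k : ℕ => if hk : k < n then
      EuclideanSpace.single (𝕜 := ℝ) (y ⟨k, hk⟩) 1 else 0 with hf
  set g : ℕ → EuclideanSpace ℝ (Fin D) := fun k : ℕ => if hk : k < n' then
      EuclideanSpace.single (𝕜 := ℝ) (y' ⟨k, hk⟩) 1 else 0 with hg
  -- cancel (1 - lam)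
  have h10 : (1 : ℝ) - lam ≠ 0 := by linarith
  have hs : ∑ k : Fin n, lam ^ (k : ℕ) • EuclideanSpace.single (𝕜 := ℝ) (y k) 1
      = ∑ k : Fin n', lam ^ (k : ℕ) • EuclideanSpace.single (𝕜 := ℝ) (y' k) 1 :=
    smul_right_injective _ h10 heq
  set N := max n n' with hN
  -- rewrite as sums over range N
  have hsum : ∀ (M : ℕ) (F : ℕ → EuclideanSpace ℝ (Fin D)), M ≤ N →
      (∀ k, M ≤ k → F k = 0) →
      (∑ k ∈ Finset.range M, lam ^ k • F k) = ∑ k ∈ Finset.range N, lam ^ k • F k := by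
    intro M F hM hF
    refine Finset.sum_subset (Finset.range_subset_range.mpr hM) ?_
    intro x _ hx
    rw [hF x (by simpa using hx), smul_zero]
  have hf0 : ∀ k, n ≤ k → f k = 0 := by
    intro k hk; simp [hf, Nat.not_lt.mpr hk]
  have hg0 : ∀ k, n' ≤ k → g k = 0 := by
    intro k hk; simp [hg, Nat.not_lt.mpr hk]
  have hs1 : ∑ k : Fin n, lam ^ (k : ℕ) • EuclideanSpace.single (𝕜 := ℝ) (y k) 1
      = ∑ k ∈ Finset.range N, lam ^ k • f k := by
    rw [← hsum n f (le_max_left _ _) hf0, ← Fin.sum_univ_eq_sum_range (fun k => lam ^ k • f k)]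
    refine Finset.sum_congr rfl fun k _ => ?_
    simp [hf, k.isLt]
  have hs2 : ∑ k : Fin n', lam ^ (k : ℕ) • EuclideanSpace.single (𝕜 := ℝ) (y' k) 1
      = ∑ k ∈ Finset.range N, lam ^ k • g k := by
    rw [← hsum n' g (le_max_right _ _) hg0, ← Fin.sum_univ_eq_sum_range (fun k => lam ^ k • g k)]
    refine Finset.sum_congr rfl fun k _ => ?_
    simp [hg, k.isLt]
  have hs' : ∑ k ∈ Finset.range N, lam ^ k • f k = ∑ k ∈ Finset.range N, lam ^ k • g k := by
    rw [← hs1, ← hs2, hs]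
  -- first index where f and g differ
  have hex : ∃ k, f k ≠ g k := Function.ne_iff.mp hne
  classical
  set m := Nat.find hex with hmdef
  have hm : f m ≠ g m := Nat.find_spec hex
  have hmN : m < N := by
    by_contra hc
    push_neg at hc
    exact hm (by rw [hf0 m (le_trans (le_max_left _ _) hc),
      hg0 m (le_trans (le_max_right _ _) hc)])
  -- pick a coordinate where they differ
  have hexd : ∃ d : Fin D, f m d ≠ g m d := by
    by_contra hc
    push_neg at hc
    exact hm (PiLp.ext hc)
  obtain ⟨d, hd⟩ := hexd
  -- integer coefficient sequences
  set A : ℕ → ℤ := fun k => if hk : k < n then (if d = y ⟨k, hk⟩ then 1 else 0) else 0 with hA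
  set B : ℕ → ℤ := fun k => if hk : k < n' then (if d = y' ⟨k, hk⟩ then 1 else 0) else 0 with hB
  have hfa : ∀ k, f k d = (A k : ℝ) := by
    intro k
    simp only [hf, hA]
    split_ifs with hk hc
    · rw [EuclideanSpace.single_apply]; simp [hc]
    · rw [EuclideanSpace.single_apply]; simp [hc]
    · norm_num
  have hga : ∀ k, g k d = (B k : ℝ) := by
    intro k
    simp only [hg, hB]
    split_ifs with hk hc
    · rw [EuclideanSpace.single_apply]; simp [hc]
    · rw [EuclideanSpace.single_apply]; simp [hc]
    · norm_num
  -- scalar equation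
  have hscal : ∑ k ∈ Finset.range N, ((A k - B k : ℤ) : ℝ) * lam ^ k = 0 := by
    have h' := congrArg (EuclideanSpace.projₗ (𝕜 := ℝ) d) hs'
    have this : ∑ k ∈ Finset.range N, lam ^ k * ((A k : ℝ)) =
        ∑ k ∈ Finset.range N, lam ^ k * ((B k : ℝ)) := by
      simpa [map_sum, PiLp.smul_apply, smul_eq_mul, hfa, hga] using h'
    push_cast
    simp only [sub_mul]
    rw [Finset.sum_sub_distrib]
    rw [sub_eq_zero]
    calc ∑ k ∈ Finset.range N, (A k : ℝ) * lam ^ k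
        = ∑ k ∈ Finset.range N, lam ^ k * (A k : ℝ) := by
          exact Finset.sum_congr rfl fun k _ => mul_comm _ _
      _ = ∑ k ∈ Finset.range N, lam ^ k * (B k : ℝ) := this
      _ = ∑ k ∈ Finset.range N, (B k : ℝ) * lam ^ k := by
          exact Finset.sum_congr rfl fun k _ => mul_comm _ _
  -- the polynomial
  set P : Polynomial ℤ := ∑ k ∈ Finset.range N, Polynomial.monomial k (A k - B k) with hP
  have hcoeff : ∀ j, P.coeff j = if j < N then A j - B j else 0 := by
    intro j
    rw [hP, Polynomial.finset_sum_coeff]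
    simp only [Polynomial.coeff_monomial]
    rw [Finset.sum_ite_eq' (Finset.range N) j]
    simp
  -- aeval q P = 0
  have hq01 : 0 < q ∧ q < 1 := by
    constructor
    · exact_mod_cast hq ▸ h0
    · exact_mod_cast hq ▸ h1
  have haeval : Polynomial.aeval q P = 0 := by
    have : Polynomial.aeval q P = ∑ k ∈ Finset.range N, ((A k - B k : ℤ) : ℚ) * q ^ k := by
      rw [hP, map_sum]
      refine Finset.sum_congr rfl fun k _ => ?_
      rw [Polynomial.aeval_monomial, eq_intCast]
    rw [this]
    have : ((∑ k ∈ Finset.range N, ((A k - B k : ℤ) : ℚ) * q ^ k : ℚ) : ℝ) = 0 := by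
      push_cast
      rw [← hscal]
      push_cast [hq]
      rfl
    exact_mod_cast this
  -- P ≠ 0 since coeff m ≠ 0
  have hcm : A m - B m ≠ 0 := by
    intro hc
    apply hd
    rw [hfa, hga]
    rw [sub_eq_zero.mp hc]
  have hPne : P ≠ 0 := by
    intro hc
    apply hcm
    have := hcoeff m
    rw [hc] at this
    simpa [hmN] using this.symm
  -- coefficients are in {-1, 0, 1}
  have hAB01 : ∀ j, (A j = 0 ∨ A j = 1) ∧ (B j = 0 ∨ B j = 1) := by
    intro j
    constructor
    · simp only [hA]; split_ifs <;> simp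
    · simp only [hB]; split_ifs <;> simp
  have hcsmall : ∀ j, P.coeff j = -1 ∨ P.coeff j = 0 ∨ P.coeff j = 1 := by
    intro j
    rw [hcoeff]
    split_ifs with hj
    · obtain ⟨hA', hB'⟩ := hAB01 j
      omega
    · simp
  -- leading coefficient is ±1, produce a monic polynomial with root q
  have hlc : P.leadingCoeff = 1 ∨ P.leadingCoeff = -1 := by
    have h1 := hcsmall P.natDegree
    have h2 : P.leadingCoeff ≠ 0 := Polynomial.leadingCoeff_ne_zero.mpr hPne
    rw [Polynomial.leadingCoeff] at h2 ⊢
    omega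
  obtain ⟨Q, hQm, hQae⟩ : ∃ Q : Polynomial ℤ, Q.Monic ∧ Polynomial.aeval q Q = 0 := by
    rcases hlc with h | h
    · exact ⟨P, h, haeval⟩
    · refine ⟨-P, ?_, by rw [map_neg, haeval, neg_zero]⟩
      rw [Polynomial.Monic, Polynomial.leadingCoeff_neg, h, neg_neg]
  -- rational root of a monic integer polynomial is an integer
  have hint : IsIntegral ℤ q := ⟨Q, hQm, hQae⟩
  obtain ⟨z, hz⟩ := IsIntegrallyClosed.isIntegral_iff.mp hint
  have hz' : (z : ℚ) = q := by exact_mod_cast hz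
  have hz0 : 0 < z := by exact_mod_cast hz' ▸ hq01.1
  have hz1 : z < 1 := by exact_mod_cast hz' ▸ hq01.2
  omega
end

section
/- Let Y be the set of standard basis vectors of R^D and λ ∈ [0, 1/2]. If h and h̄ are two infinite histories over Y that differ within the first m observations (there exists 0 ≤ k < m with y_{-k} ≠ ȳ_{-k}), then ‖z_λ(h) − z_λ(h̄)‖ ≥ √2 · (1 − 2λ) · λ^{m−1}. -/
/-- Separation: if λ ∈ [0, 1/2] and two infinite one-hot histories differ within
their first m observations, then their memory traces are at distance at least
√2 · (1 − 2λ) · λ^{m−1}. -/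
theorem memory_trace_separation
    (D : ℕ) (lam : ℝ) (h0 : 0 ≤ lam) (h1 : lam ≤ 1 / 2)
    (m : ℕ) (h hbar : ℕ → Fin D)
    (hdiff : ∃ k < m, h k ≠ hbar k) :
    ‖(1 - lam) • ∑' k : ℕ, lam ^ k • EuclideanSpace.single (𝕜 := ℝ) (h k) 1
      - (1 - lam) • ∑' k : ℕ, lam ^ k • EuclideanSpace.single (𝕜 := ℝ) (hbar k) 1‖
      ≥ Real.sqrt 2 * (1 - 2 * lam) * lam ^ (m - 1) := by
  classical
  obtain ⟨k1, hk1m, hk1⟩ := hdiff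
  have hex : ∃ k, h k ≠ hbar k := ⟨k1, hk1⟩
  set k₀ := Nat.find hex with hk₀def
  have hne : h k₀ ≠ hbar k₀ := Nat.find_spec hex
  have hmin : ∀ k < k₀, h k = hbar k := fun k hk => not_not.mp (Nat.find_min hex hk)
  have hk₀le : k₀ ≤ m - 1 := by
    have : k₀ ≤ k1 := Nat.find_min' hex hk1
    omega
  have hlam1 : lam < 1 := lt_of_le_of_lt h1 (by norm_num)
  have h2lam : 1 - 2 * lam ≥ 0 := by linarith
  set i := h k₀ with hi
  set j := hbar k₀ with hj
  set u : EuclideanSpace ℝ (Fin D) :=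
    EuclideanSpace.single i 1 - EuclideanSpace.single j 1 with hu
  -- summability
  have hsum : ∀ g : ℕ → Fin D,
      Summable (fun k : ℕ => lam ^ k • EuclideanSpace.single (𝕜 := ℝ) (g k) (1:ℝ)) := by
    intro g
    apply Summable.of_norm
    have : ∀ k : ℕ, ‖lam ^ k • EuclideanSpace.single (𝕜 := ℝ) (g k) (1:ℝ)‖ = lam ^ k := by
      intro k
      rw [norm_smul, EuclideanSpace.norm_single]
      simp [abs_of_nonneg h0]
    simp only [this]
    exact summable_geometric_of_lt_one h0 hlam1
  set d : EuclideanSpace ℝ (Fin D) :=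
    (1 - lam) • ∑' k : ℕ, lam ^ k • EuclideanSpace.single (𝕜 := ℝ) (h k) 1
      - (1 - lam) • ∑' k : ℕ, lam ^ k • EuclideanSpace.single (𝕜 := ℝ) (hbar k) 1 with hd
  -- the coefficient function
  set f : ℕ → ℝ := fun k =>
    ((if i = h k then (1:ℝ) else 0) - (if j = h k then 1 else 0))
      - ((if i = hbar k then (1:ℝ) else 0) - (if j = hbar k then 1 else 0)) with hf
  have hinner_single : ∀ a : Fin D,
      (inner ℝ u (EuclideanSpace.single (𝕜 := ℝ) a (1:ℝ)) : ℝ)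
        = (if i = a then (1:ℝ) else 0) - (if j = a then 1 else 0) := by
    intro a
    rw [hu, inner_sub_left, EuclideanSpace.inner_single_left, EuclideanSpace.inner_single_left]
    simp [EuclideanSpace.single_apply]
  have hinner_tsum : ∀ g : ℕ → Fin D,
      (inner ℝ u (∑' k : ℕ, lam ^ k • EuclideanSpace.single (𝕜 := ℝ) (g k) (1:ℝ)) : ℝ)
        = ∑' k : ℕ, lam ^ k * ((if i = g k then (1:ℝ) else 0) - (if j = g k then 1 else 0)) := by
    intro g
    have heq : (inner ℝ u (∑' k : ℕ, lam ^ k • EuclideanSpace.single (𝕜 := ℝ) (g k) (1:ℝ)) : ℝ)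
        = (innerSL ℝ u) (∑' k : ℕ, lam ^ k • EuclideanSpace.single (𝕜 := ℝ) (g k) (1:ℝ)) := rfl
    rw [heq, ContinuousLinearMap.map_tsum (innerSL ℝ u) (hsum g)]
    congr 1
    ext k
    simp only [innerSL_apply_apply, inner_smul_right, hinner_single]
  have hgen : ∀ F : ℕ → ℝ, (∀ k, |F k| ≤ 2) → Summable (fun k : ℕ => lam ^ k * F k) := by
    intro F hF
    apply Summable.of_norm
    apply Summable.of_nonneg_of_le (fun k => norm_nonneg _)
      (fun k => ?_) ((summable_geometric_of_lt_one h0 hlam1).mul_right 2)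
    rw [Real.norm_eq_abs, abs_mul, abs_of_nonneg (pow_nonneg h0 k)]
    nlinarith [pow_nonneg h0 k, abs_nonneg (F k), hF k]
  have habs : ∀ g : ℕ → Fin D, ∀ k,
      |(if i = g k then (1:ℝ) else 0) - (if j = g k then 1 else 0)| ≤ 2 := by
    intro g k; split_ifs <;> norm_num
  have hgsum : Summable (fun k : ℕ => lam ^ k * f k) := by
    apply hgen
    intro k; rw [hf]; dsimp only
    split_ifs <;> norm_num
  have hinner_d : (inner ℝ u d : ℝ) = (1 - lam) * ∑' k : ℕ, lam ^ k * f k := by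
    rw [hd, inner_sub_right, real_inner_smul_right, real_inner_smul_right,
      hinner_tsum h, hinner_tsum hbar, ← mul_sub]
    rw [← Summable.tsum_sub (hgen _ (habs h)) (hgen _ (habs hbar))]
    congr 1
    exact tsum_congr fun k => by simp only [hf]; ring
  -- values of f
  have hf_lt : ∀ k < k₀, f k = 0 := by
    intro k hk; simp only [hf]; rw [hmin k hk]; ring
  have hf_k₀ : f k₀ = 2 := by
    simp only [hf, ← hi, ← hj]
    rw [if_neg (Ne.symm hne), if_neg hne]
    norm_num
  have hfabs : ∀ k, |f k| ≤ 2 := by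
    intro k; simp only [hf]; split_ifs <;> norm_num
  have hgeo : Summable (fun k : ℕ => lam ^ k) := summable_geometric_of_lt_one h0 hlam1
  have h1l : (0:ℝ) < 1 - lam := by linarith
  have key : 2 * lam ^ k₀ - 2 * lam ^ (k₀+1) * (1 - lam)⁻¹ ≤ ∑' k : ℕ, lam ^ k * f k := by
    rw [← Summable.sum_add_tsum_nat_add (k₀+1) hgsum]
    have hfin : ∑ k ∈ Finset.range (k₀+1), lam ^ k * f k = 2 * lam ^ k₀ := by
      rw [Finset.sum_eq_single k₀]
      · rw [hf_k₀]; ring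
      · intro b hb hbne
        have hblt : b < k₀ := by
          have := Finset.mem_range.mp hb; omega
        rw [hf_lt b hblt]; ring
      · intro hk; exact absurd (Finset.self_mem_range_succ k₀) hk
    rw [hfin]
    have hlow : Summable (fun k : ℕ => -2 * lam ^ (k + (k₀+1))) := by
      have : (fun k : ℕ => -2 * lam ^ (k + (k₀+1)))
          = fun k : ℕ => (-2 * lam ^ (k₀+1)) * lam ^ k := by
        funext k; rw [pow_add]; ring
      rw [this]; exact hgeo.mul_left _
    have htail : (∑' k : ℕ, -2 * lam ^ (k + (k₀+1)))
        ≤ ∑' k : ℕ, lam ^ (k + (k₀+1)) * f (k + (k₀+1)) := by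
      apply Summable.tsum_le_tsum _ hlow ((summable_nat_add_iff (k₀+1)).mpr hgsum)
      intro k
      have h1 := hfabs (k + (k₀+1))
      have h2 : (0:ℝ) ≤ lam ^ (k + (k₀+1)) := pow_nonneg h0 _
      nlinarith [abs_le.mp h1]
    have hlowval : (∑' k : ℕ, -2 * lam ^ (k + (k₀+1)))
        = -2 * lam ^ (k₀+1) * (1 - lam)⁻¹ := by
      have : (fun k : ℕ => -2 * lam ^ (k + (k₀+1)))
          = fun k : ℕ => (-2 * lam ^ (k₀+1)) * lam ^ k := by
        funext k; rw [pow_add]; ring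
      rw [this, tsum_mul_left, tsum_geometric_of_lt_one h0 hlam1]
    linarith [htail, hlowval ▸ htail]
  have hinner_lb : 2 * lam ^ k₀ * (1 - 2 * lam) ≤ (inner ℝ u d : ℝ) := by
    rw [hinner_d]
    have hmul := mul_le_mul_of_nonneg_left key (le_of_lt h1l)
    have hval : (1 - lam) * (2 * lam ^ k₀ - 2 * lam ^ (k₀+1) * (1 - lam)⁻¹)
        = 2 * lam ^ k₀ * (1 - 2 * lam) := by
      field_simp
      ring
    linarith [hval ▸ hmul]
  have hnormu : ‖u‖ = Real.sqrt 2 := by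
    have hinu : (inner ℝ u u : ℝ) = 2 := by
      simp only [hu, inner_sub_left, inner_sub_right, EuclideanSpace.inner_single_left,
        EuclideanSpace.inner_single_right, EuclideanSpace.single_apply, map_one]
      rw [if_neg hne, if_neg (Ne.symm hne)]
      simp
      norm_num
    rw [@norm_eq_sqrt_real_inner, hinu]
  have hcs : (inner ℝ u d : ℝ) ≤ ‖u‖ * ‖d‖ := real_inner_le_norm u d
  have hpow : lam ^ (m-1) ≤ lam ^ k₀ := pow_le_pow_of_le_one h0 (by linarith) hk₀le
  have hs2 : (0:ℝ) < Real.sqrt 2 := by positivity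
  have hs2sq : Real.sqrt 2 * Real.sqrt 2 = 2 := Real.mul_self_sqrt (by norm_num)
  have hstep : 2 * lam ^ (m-1) * (1 - 2*lam) ≤ Real.sqrt 2 * ‖d‖ := by
    calc 2 * lam ^ (m-1) * (1 - 2*lam) ≤ 2 * lam ^ k₀ * (1 - 2*lam) := by nlinarith
      _ ≤ (inner ℝ u d : ℝ) := hinner_lb
      _ ≤ ‖u‖ * ‖d‖ := hcs
      _ = Real.sqrt 2 * ‖d‖ := by rw [hnormu]
  rw [ge_iff_le]
  nlinarith [hstep, hs2sq, hs2, norm_nonneg d]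
end

section
/- Let e_1, ..., e_5 be the standard basis of R^5, let k ≥ 2 and λ = (k−1)/k. Define for one-hot symbols a, b, o, x the length-k traces z_1 = (1−λ)(x + Σ_{j=1}^{k−2} λ^j o + λ^{k−1} a) and z_2 = (1−λ)(x + Σ_{j=1}^{k−2} λ^j o + λ^{k−1} b), where a, b, o, x are distinct standard basis vectors (most recent observation first). Then ‖z_1 − z_2‖ = √2 (1−λ) λ^{k−1} ≥ √2/(e·k). -/
lemma aux_exp_bound (m : ℕ) (hm : 1 ≤ m) :
    (Real.exp 1)⁻¹ ≤ ((m : ℝ) / (m + 1)) ^ m := by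
  have hm' : (0:ℝ) < m := by exact_mod_cast hm
  have h1 : ((m : ℝ) + 1) / m ≤ Real.exp (1 / m) := by
    have := Real.add_one_le_exp (1 / (m:ℝ))
    have : 1 / (m:ℝ) + 1 ≤ Real.exp (1 / m) := this
    calc ((m:ℝ) + 1) / m = 1 / m + 1 := by field_simp; ring
    _ ≤ Real.exp (1 / m) := this
  have hpos : (0:ℝ) < ((m:ℝ) + 1) / m := by positivity
  have h2 : (((m : ℝ) + 1) / m) ^ m ≤ Real.exp 1 := by
    calc (((m : ℝ) + 1) / m) ^ m ≤ (Real.exp (1 / m)) ^ m :=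
          pow_le_pow_left₀ (le_of_lt hpos) h1 m
    _ = Real.exp ((m : ℝ) * (1 / m)) := by
          rw [← Real.exp_nat_mul]
    _ = Real.exp 1 := by rw [mul_one_div, div_self (ne_of_gt hm')]
  have hinv : ((m : ℝ) / (m + 1)) ^ m = ((((m:ℝ) + 1) / m) ^ m)⁻¹ := by
    rw [← inv_pow]
    congr 1
    rw [inv_div]
  rw [hinv]
  exact inv_anti₀ (pow_pos hpos m) h2

/-- T-maze trace distance: the traces of the histories a·o^{k−2}·x and
b·o^{k−2}·x (with λ = (k−1)/k) are at distance exactly √2(1−λ)λ^{k−1},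
which is at least √2/(e·k). -/
theorem tmaze_trace_distance (k : ℕ) (hk : 2 ≤ k) (lam : ℝ)
    (hlam : lam = ((k : ℝ) - 1) / k)
    (ia ib io ix : Fin 5)
    (hab : ia ≠ ib) (hao : ia ≠ io) (hax : ia ≠ ix)
    (hbo : ib ≠ io) (hbx : ib ≠ ix) (hox : io ≠ ix)
    (a b o x z1 z2 : EuclideanSpace ℝ (Fin 5))
    (ha : a = EuclideanSpace.single ia 1) (hb : b = EuclideanSpace.single ib 1)
    (ho : o = EuclideanSpace.single io 1) (hx : x = EuclideanSpace.single ix 1)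
    (hz1 : z1 = (1 - lam) • (x + (∑ j ∈ Finset.Icc 1 (k - 2), lam ^ j • o) + lam ^ (k - 1) • a))
    (hz2 : z2 = (1 - lam) • (x + (∑ j ∈ Finset.Icc 1 (k - 2), lam ^ j • o) + lam ^ (k - 1) • b)) :
    ‖z1 - z2‖ = Real.sqrt 2 * (1 - lam) * lam ^ (k - 1) ∧
    Real.sqrt 2 / (Real.exp 1 * k) ≤ ‖z1 - z2‖ := by
  have hk1 : (1:ℝ) ≤ (k:ℝ) := by exact_mod_cast Nat.one_le_of_lt hk
  have hkpos : (0:ℝ) < (k:ℝ) := by linarith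
  have hlam0 : 0 ≤ lam := by
    rw [hlam]; apply div_nonneg <;> linarith
  have hlam1 : 1 - lam = 1 / k := by
    rw [hlam]; field_simp; ring
  have hlam1' : 0 ≤ 1 - lam := by rw [hlam1]; positivity
  -- norm of a - b
  have hinner : (inner ℝ a b : ℝ) = 0 := by
    rw [ha, hb, EuclideanSpace.inner_single_left]
    simp [EuclideanSpace.single_apply, hab]
  have hna : ‖a‖ = 1 := by rw [ha, EuclideanSpace.norm_single]; norm_num
  have hnb : ‖b‖ = 1 := by rw [hb, EuclideanSpace.norm_single]; norm_num
  have hsq : ‖a - b‖ ^ 2 = 2 := by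
    rw [norm_sub_sq_real, hna, hnb, hinner]; ring
  have hnab : ‖a - b‖ = Real.sqrt 2 := by
    rw [← hsq, Real.sqrt_sq (norm_nonneg _)]
  have hdiff : z1 - z2 = ((1 - lam) * lam ^ (k - 1)) • (a - b) := by
    rw [hz1, hz2]; module
  have heq : ‖z1 - z2‖ = Real.sqrt 2 * (1 - lam) * lam ^ (k - 1) := by
    rw [hdiff, norm_smul, hnab, Real.norm_eq_abs,
      abs_of_nonneg (mul_nonneg hlam1' (pow_nonneg hlam0 _))]
    ring
  refine ⟨heq, ?_⟩
  rw [heq]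
  -- bound: λ^{k-1} ≥ 1/e
  have hm : 1 ≤ k - 1 := by omega
  have hcast : ((k - 1 : ℕ) : ℝ) = (k:ℝ) - 1 := by
    have : (1:ℕ) ≤ k := by omega
    push_cast [Nat.cast_sub this]; ring
  have hlam' : lam = ((k - 1 : ℕ) : ℝ) / (((k - 1 : ℕ) : ℝ) + 1) := by
    rw [hlam, hcast]; congr 1; ring
  have hbound : (Real.exp 1)⁻¹ ≤ lam ^ (k - 1) := by
    rw [hlam']; exact aux_exp_bound (k - 1) hm
  have he : (0:ℝ) < Real.exp 1 := Real.exp_pos 1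
  rw [hlam1]
  rw [div_le_iff₀ (by positivity)]
  have h2 : (0:ℝ) ≤ Real.sqrt 2 := Real.sqrt_nonneg 2
  calc Real.sqrt 2 = Real.sqrt 2 * (1/k) * (Real.exp 1)⁻¹ * (Real.exp 1 * k) := by
        field_simp
  _ ≤ Real.sqrt 2 * (1/k) * lam ^ (k-1) * (Real.exp 1 * k) := by
        apply mul_le_mul_of_nonneg_right _ (by positivity)
        apply mul_le_mul_of_nonneg_left hbound (by positivity)
end
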